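/- Let d : [0,T] → (0,∞) be continuous, and set ϑ₀ := min_{t∈[0,T]} d(t)/2. For any λ ∈ ℝ with T|λ| < ϑ₀, and any continuous functions a, b, c with c(t) = (a(t)+b(t))/2, d(t) = (b(t)-a(t))/2, the map φ_λ(t,·) : (0,π) → (a(t),b(t)) defined by φ_λ(t,x) = c(t) - d(t)cos(x) + tλ sin²(x) is, for each t ∈ [0,T], a real-analytic diffeomorphism onto (a(t),b(t)). -/
import Mathlib


open Set Filter Topology


lemma analyticAt_ccos' (z : ℂ) : AnalyticAt ℂ Complex.cos z := by
  have h : AnalyticAt ℂ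
      (fun z : ℂ => (Complex.exp (z * Complex.I) + Complex.exp (-z * Complex.I)) / 2) z :=
    ((analyticAt_cexp.comp ((analyticAt_id).mul analyticAt_const)).add
      (analyticAt_cexp.comp ((analyticAt_id.neg).mul analyticAt_const))).div
      analyticAt_const (by norm_num)
  have he : Complex.cos = fun z : ℂ =>
      (Complex.exp (z * Complex.I) + Complex.exp (-z * Complex.I)) / 2 := funext fun z => rfl
  rw [he]; exact h

lemma analyticAt_csin' (z : ℂ) : AnalyticAt ℂ Complex.sin z := by
  have h : AnalyticAt ℂ
      (fun z : ℂ => (Complex.exp (-z * Complex.I) - Complex.exp (z * Complex.I)) * Complex.I / 2) z :=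
    (((analyticAt_cexp.comp ((analyticAt_id.neg).mul analyticAt_const)).sub
      (analyticAt_cexp.comp ((analyticAt_id).mul analyticAt_const))).mul analyticAt_const).div
      analyticAt_const (by norm_num)
  have he : Complex.sin = fun z : ℂ =>
      (Complex.exp (-z * Complex.I) - Complex.exp (z * Complex.I)) * Complex.I / 2 :=
    funext fun z => rfl
  rw [he]; exact h

lemma analyticAt_rcos' (x : ℝ) : AnalyticAt ℝ Real.cos x := by
  have h3 : AnalyticAt ℝ (fun y : ℝ => Complex.cos (y : ℂ)) x :=
    ((analyticAt_ccos' (x : ℂ)).restrictScalars).comp (Complex.ofRealCLM.analyticAt x)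
  have h4 : AnalyticAt ℝ (fun y : ℝ => Complex.reCLM (Complex.cos (y : ℂ))) x :=
    AnalyticAt.comp (f := fun y : ℝ => Complex.cos (y : ℂ))
      (Complex.reCLM.analyticAt (Complex.cos (x : ℂ))) h3
  have he : (fun y : ℝ => Complex.reCLM (Complex.cos (y : ℂ))) = Real.cos :=
    funext fun y => Complex.cos_ofReal_re y
  rwa [he] at h4

lemma analyticAt_rsin' (x : ℝ) : AnalyticAt ℝ Real.sin x := by
  have h3 : AnalyticAt ℝ (fun y : ℝ => Complex.sin (y : ℂ)) x :=
    ((analyticAt_csin' (x : ℂ)).restrictScalars).comp (Complex.ofRealCLM.analyticAt x)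
  have h4 : AnalyticAt ℝ (fun y : ℝ => Complex.reCLM (Complex.sin (y : ℂ))) x :=
    AnalyticAt.comp (f := fun y : ℝ => Complex.sin (y : ℂ))
      (Complex.reCLM.analyticAt (Complex.sin (x : ℂ))) h3
  have he : (fun y : ℝ => Complex.reCLM (Complex.sin (y : ℂ))) = Real.sin :=
    funext fun y => Complex.sin_ofReal_re y
  rwa [he] at h4

/-- Section 4: for `T|λ| < ϑ₀ = min d/2`, the map
`φ_λ(t,x) = c(t) - d(t)cos(x) + tλ sin²(x)` is, for each `t ∈ [0,T]`, a real-analytic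
diffeomorphism from `(0,π)` onto `(a(t), b(t))`. -/
theorem stmt18 (T : ℝ) (hT : 0 < T) (a b c d : ℝ → ℝ)
    (hc : ∀ t, c t = (a t + b t) / 2) (hd : ∀ t, d t = (b t - a t) / 2)
    (hd_cont : ContinuousOn d (Icc 0 T))
    (hd_pos : ∀ t ∈ Icc (0:ℝ) T, 0 < d t)
    (lam : ℝ)
    (hlam : ∀ t ∈ Icc (0:ℝ) T, T * |lam| < d t / 2) :
    ∀ t ∈ Icc (0:ℝ) T,
      (∀ x ∈ Ioo (0:ℝ) Real.pi,
        AnalyticAt ℝ (fun x => c t - d t * Real.cos x + t * lam * Real.sin x ^ 2) x) ∧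
      (∀ x ∈ Ioo (0:ℝ) Real.pi,
        0 < deriv (fun x => c t - d t * Real.cos x + t * lam * Real.sin x ^ 2) x) ∧
      InjOn (fun x => c t - d t * Real.cos x + t * lam * Real.sin x ^ 2) (Ioo 0 Real.pi) ∧
      (fun x => c t - d t * Real.cos x + t * lam * Real.sin x ^ 2) '' Ioo 0 Real.pi
        = Ioo (a t) (b t) := by
  intro t ht
  set f : ℝ → ℝ := fun x => c t - d t * Real.cos x + t * lam * Real.sin x ^ 2 with hf
  have hderiv : ∀ x : ℝ, HasDerivAt f (Real.sin x * (d t + 2 * (t * lam) * Real.cos x)) x := by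
    intro x
    have h1 : HasDerivAt f
        (0 - d t * (-Real.sin x) + t * lam * (↑2 * Real.sin x ^ (2-1) * Real.cos x)) x :=
      ((hasDerivAt_const x (c t)).sub ((Real.hasDerivAt_cos x).const_mul (d t))).add
        (((Real.hasDerivAt_sin x).pow 2).const_mul (t * lam))
    convert h1 using 1
    push_cast
    ring
  have hpos2 : ∀ x : ℝ, 0 < d t + 2 * (t * lam) * Real.cos x := by
    intro x
    have h1 : |Real.cos x| ≤ 1 := Real.abs_cos_le_one x
    have h2 : |t| ≤ T := abs_le.2 ⟨by linarith [ht.1], ht.2⟩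
    have h3 : |2 * (t * lam) * Real.cos x| ≤ 2 * (T * |lam|) := by
      have : |2 * (t * lam) * Real.cos x| = 2 * (|t| * |lam|) * |Real.cos x| := by
        simp [abs_mul]
      rw [this]
      have hl : (0:ℝ) ≤ |lam| := abs_nonneg _
      have hA : |t| * |lam| ≤ T * |lam| := mul_le_mul_of_nonneg_right h2 hl
      have hc0 : (0:ℝ) ≤ |Real.cos x| := abs_nonneg _
      have htl : (0:ℝ) ≤ |t| * |lam| := mul_nonneg (abs_nonneg t) hl
      nlinarith
    have h4 := hlam t ht
    have h5 := neg_abs_le (2 * (t * lam) * Real.cos x)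
    linarith
  have hdpos : ∀ x ∈ Ioo (0:ℝ) Real.pi, 0 < deriv f x := by
    intro x hx
    rw [(hderiv x).deriv]
    exact mul_pos (Real.sin_pos_of_pos_of_lt_pi hx.1 hx.2) (hpos2 x)
  have hcont : ContinuousOn f (Icc 0 Real.pi) :=
    fun x _ => (hderiv x).differentiableAt.continuousAt.continuousWithinAt
  have hmono : StrictMonoOn f (Icc 0 Real.pi) := by
    apply StrictMonoOn.mono (s := Icc 0 Real.pi) ?_ subset_rfl
    apply strictMonoOn_of_deriv_pos (convex_Icc _ _) hcont
    rw [interior_Icc]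
    exact hdpos
  have hf0 : f 0 = a t := by simp [hf, hc t, hd t]; ring
  have hfpi : f Real.pi = b t := by simp [hf, hc t, hd t]; ring
  refine ⟨?_, hdpos, ?_, ?_⟩
  · intro x _
    have : AnalyticAt ℝ f x := by
      apply AnalyticAt.add
      · exact analyticAt_const.sub (analyticAt_const.mul (analyticAt_rcos' x))
      · exact analyticAt_const.mul ((analyticAt_rsin' x).pow 2)
    exact this
  · exact (hmono.injOn).mono Ioo_subset_Icc_self
  · apply Subset.antisymm
    · rintro y ⟨x, hx, rfl⟩
      have h0 : f 0 < f x := hmono (left_mem_Icc.2 Real.pi_pos.le)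
        (Ioo_subset_Icc_self hx) hx.1
      have h1 : f x < f Real.pi := hmono (Ioo_subset_Icc_self hx)
        (right_mem_Icc.2 Real.pi_pos.le) hx.2
      rw [hf0] at h0; rw [hfpi] at h1
      exact ⟨h0, h1⟩
    · have := intermediate_value_Ioo (a := (0:ℝ)) (b := Real.pi) Real.pi_pos.le hcont
      rwa [hf0, hfpi] at this
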